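/- Let R be a discrete valuation ring with uniformizer π, A ∈ R^{k×k} with det A ≠ 0, e := val_π(det A), and integers d_1 ≥ ... ≥ d_k ≥ 0 such that π^{d_i} divides every entry of column i of A for each i. Write e' := e − (d_2 + ... + d_k). Then: (a) for every y ∈ π^{e'} R^{1×k} there exists x ∈ R^{1×k} with xA = y; (b) if u ≥ e' and x ∈ R^{1×k} satisfies xA ∈ R^{1×k} π^u, then x ∈ R^{1×k} π^{u−e'}. -/

import Mathlib

open Matrix Finset

/-- **Improved solvability and divisibility bounds from columnwise divisibility:**
with `e = val_π(det A)`, `π^{d_i}` dividing column `i` of `A`, `d_1 ≥ … ≥ d_k`, and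
`e' = e − (d_2 + ⋯ + d_k)`:
(a) every row vector `y` with entries divisible by `π^{e'}` is of the form `xA`;
(b) if `u ≥ e'` and the entries of `xA` are divisible by `π^u`, then those of `x` are
divisible by `π^{u−e'}`. -/
theorem vecMul_solvable_and_dvd_of_col_dvd
    {R : Type*} [CommRing R] [IsDomain R] [IsDiscreteValuationRing R]
    (π : R) (hπ : Irreducible π)
    (k : ℕ) (A : Matrix (Fin (k + 1)) (Fin (k + 1)) R) (hA : A.det ≠ 0)
    (e : ℕ) (he : π ^ e ∣ A.det ∧ ¬ π ^ (e + 1) ∣ A.det)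
    (d : Fin (k + 1) → ℕ) (hd : Antitone d)
    (hcol : ∀ i j, π ^ d i ∣ A j i) :
    (∀ y : Fin (k + 1) → R,
        (∀ i, π ^ (e - ∑ i ∈ Finset.univ.erase 0, d i) ∣ y i) →
        ∃ x : Fin (k + 1) → R, Matrix.vecMul x A = y) ∧
    (∀ u : ℕ, (e - ∑ i ∈ Finset.univ.erase 0, d i) ≤ u → ∀ x : Fin (k + 1) → R,
        (∀ i, π ^ u ∣ Matrix.vecMul x A i) →
        ∀ i, π ^ (u - (e - ∑ i ∈ Finset.univ.erase 0, d i)) ∣ x i) := by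
  classical
  have hπ0 : π ≠ 0 := hπ.ne_zero
  set D : ℕ := ∑ i ∈ Finset.univ.erase 0, d i with hDdef
  set S : ℕ := ∑ i, d i with hSdef
  have hDS : D + d 0 = S := Finset.sum_erase_add _ _ (Finset.mem_univ 0)
  -- π ^ S divides det A
  have hdetdvd : π ^ S ∣ A.det := by
    rw [Matrix.det_apply]
    refine Finset.dvd_sum fun σ _ => ?_
    have h1 : π ^ S ∣ ∏ i, A (σ i) i := by
      rw [hSdef, ← Finset.prod_pow_eq_pow_sum]
      exact Finset.prod_dvd_prod_of_dvd _ _ fun i _ => hcol i (σ i)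
    obtain ⟨t, ht⟩ := h1
    exact ⟨(Equiv.Perm.sign σ : ℤ) • t, by rw [ht, Units.smul_def, mul_smul_comm]⟩
  have hSe : S ≤ e := by
    by_contra h
    exact he.2 (dvd_trans (pow_dvd_pow _ (by omega)) hdetdvd)
  have hDe : D ≤ e := by omega
  -- adjugate entries divisible by π ^ D
  have hadj : ∀ i j, π ^ D ∣ A.adjugate i j := by
    intro i j
    rw [Matrix.adjugate_apply, Matrix.det_apply]
    refine Finset.dvd_sum fun σ _ => ?_
    set M := A.updateRow j (Pi.single i 1) with hM
    rcases eq_or_ne (σ i) j with hσ | hσ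
    · have hDle : D ≤ ∑ c ∈ Finset.univ.erase i, d c := by
        have h2 : (∑ c ∈ Finset.univ.erase i, d c) + d i = S :=
          Finset.sum_erase_add _ _ (Finset.mem_univ i)
        have h3 : d i ≤ d 0 := hd (Fin.zero_le i)
        omega
      have h1 : π ^ D ∣ ∏ c ∈ Finset.univ.erase i, M (σ c) c := by
        refine dvd_trans (pow_dvd_pow _ hDle) ?_
        rw [← Finset.prod_pow_eq_pow_sum]
        refine Finset.prod_dvd_prod_of_dvd _ _ fun c hc => ?_
        have hc' : c ≠ i := (Finset.mem_erase.mp hc).1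
        have hne : σ c ≠ j := by
          rw [← hσ]; exact fun h => hc' (σ.injective h)
        rw [hM, Matrix.updateRow_ne hne]
        exact hcol c (σ c)
      have hsplit : (∏ c, M (σ c) c) = M (σ i) i * ∏ c ∈ Finset.univ.erase i, M (σ c) c :=
        (Finset.mul_prod_erase _ _ (Finset.mem_univ i)).symm
      have hMi : M (σ i) i = 1 := by
        rw [hM, hσ, Matrix.updateRow_self, Pi.single_eq_same]
      obtain ⟨t, ht⟩ := h1
      exact ⟨(Equiv.Perm.sign σ : ℤ) • t, by
        rw [hsplit, hMi, one_mul, ht, Units.smul_def, mul_smul_comm]⟩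
    · have hzero : (∏ c, M (σ c) c) = 0 := by
        refine Finset.prod_eq_zero (Finset.mem_univ (σ.symm j)) ?_
        have h1 : σ (σ.symm j) = j := σ.apply_symm_apply j
        have h2 : σ.symm j ≠ i := by
          intro h; rw [h] at h1; exact hσ h1
        rw [hM, h1, Matrix.updateRow_self, Pi.single_eq_of_ne h2]
      rw [hzero, smul_zero]
      exact dvd_zero _
  choose B hB using hadj
  set Bm : Matrix (Fin (k + 1)) (Fin (k + 1)) R := Matrix.of B with hBm
  have hadjB : A.adjugate = (π ^ D) • Bm := by
    ext i j
    rw [Matrix.smul_apply, smul_eq_mul]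
    exact hB i j
  -- det A = π ^ e * c with c a unit
  obtain ⟨c, hc⟩ := he.1
  have hcunit : IsUnit c := by
    by_contra hcu
    have hmem : c ∈ IsLocalRing.maximalIdeal R := hcu
    rw [(IsDiscreteValuationRing.irreducible_iff_uniformizer π).mp hπ,
      Ideal.mem_span_singleton] at hmem
    obtain ⟨c', hc'⟩ := hmem
    exact he.2 ⟨c', by rw [hc, hc', pow_succ]; ring⟩
  have hee' : e = D + (e - D) := by omega
  -- key identity : Bm * A = (π ^ (e - D) * c) • 1
  have hBA : Bm * A = (π ^ (e - D) * c) • (1 : Matrix (Fin (k + 1)) (Fin (k + 1)) R) := by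
    have h1 : (π ^ D) • (Bm * A) = (π ^ D) • ((π ^ (e - D) * c) • (1 : Matrix (Fin (k + 1)) (Fin (k + 1)) R)) := by
      rw [← Matrix.smul_mul, ← hadjB, Matrix.adjugate_mul, hc, smul_smul]
      congr 1
      rw [← mul_assoc, ← pow_add, ← hee']
    ext i j
    have := congrFun (congrFun h1 i) j
    simp only [Matrix.smul_apply, smul_eq_mul] at this
    exact mul_left_cancel₀ (pow_ne_zero _ hπ0) this
  obtain ⟨cu, hcu⟩ := hcunit
  constructor
  · -- part (a)
    intro y hy
    choose z hz using hy
    refine ⟨(↑cu⁻¹ : R) • (z ᵥ* Bm), ?_⟩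
    rw [Matrix.smul_vecMul, Matrix.vecMul_vecMul, hBA]
    funext j
    have : (z ᵥ* ((π ^ (e - D) * c) • (1 : Matrix (Fin (k + 1)) (Fin (k + 1)) R))) j
        = (π ^ (e - D) * c) * z j := by
      simp [Matrix.vecMul, dotProduct, Matrix.smul_apply, Matrix.one_apply, mul_comm,
        Finset.sum_ite_eq, mul_assoc]
    rw [Pi.smul_apply, this, smul_eq_mul, hz j, ← hcu]
    calc (↑cu⁻¹ : R) * (π ^ (e - D) * ↑cu * z j)
        = (↑cu⁻¹ * ↑cu : R) * (π ^ (e - D) * z j) := by ring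
      _ = π ^ (e - D) * z j := by rw [Units.inv_mul, one_mul]
  · -- part (b)
    intro u hu x hx i
    choose w hw using hx
    have hxA : x ᵥ* A = (π ^ u) • w := by
      funext j; rw [Pi.smul_apply, smul_eq_mul]; exact hw j
    have key : A.det • x = (π ^ (u + D)) • (w ᵥ* Bm) := by
      have h1 : (x ᵥ* A) ᵥ* A.adjugate = A.det • x := by
        rw [Matrix.vecMul_vecMul, Matrix.mul_adjugate]
        funext j
        simp [Matrix.vecMul, dotProduct, Matrix.smul_apply, Matrix.one_apply, mul_comm,
          Finset.sum_ite_eq]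
      rw [← h1, hxA, hadjB, Matrix.smul_vecMul]
      have h2 : (w ᵥ* ((π ^ D) • Bm)) = (π ^ D) • (w ᵥ* Bm) := by
        funext j
        simp [Matrix.vecMul, dotProduct, Matrix.smul_apply, Finset.mul_sum, mul_assoc,
          mul_left_comm]
      rw [h2, smul_smul, ← pow_add]
    have hkey := congrFun key i
    simp only [Pi.smul_apply, smul_eq_mul] at hkey
    rw [hc] at hkey
    -- π ^ e * c * x i = π ^ (u + D) * (w ᵥ* Bm) i
    have hue : e ≤ u + D := by omega
    have hsub : u + D = e + (u - (e - D)) := by omega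
    have hcan : c * x i = π ^ (u - (e - D)) * (w ᵥ* Bm) i := by
      apply mul_left_cancel₀ (pow_ne_zero e hπ0)
      calc π ^ e * (c * x i) = π ^ e * c * x i := by ring
        _ = π ^ (u + D) * (w ᵥ* Bm) i := hkey
        _ = π ^ e * (π ^ (u - (e - D)) * (w ᵥ* Bm) i) := by
            rw [hsub, pow_add]; ring
    refine ⟨(↑cu⁻¹ : R) * (w ᵥ* Bm) i, ?_⟩
    have hx : x i = (↑cu⁻¹ : R) * (c * x i) := by
      rw [← hcu, ← mul_assoc, Units.inv_mul, one_mul]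
    rw [hx, hcan]; ring
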